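/- Let T be a spider with 2m legs, each of length r, where m ≥ 1 and r ≥ 1. If m < ⌈log_2(r+1)⌉, then the cooling number satisfies CL(T) ≥ 2 · Σ_{i=1}^{m} ⌊(r+1)/2^i⌋. -/

import Mathlib

/-- A cooling sequence for `G`: a sequence `v : Fin k → V` of sources (the `i`-th source,
0-based, is chosen in round `i + 1`) such that each source is uncooled when chosen
(`dist (v i) (v j) > j - i` for `i < j` in 1-based indexing), and the sequence cannot be
extended: every vertex is cooled by the end of round `k + 1`. -/
def IsCoolingSeq {V : Type*} (G : SimpleGraph V) {k : ℕ} (v : Fin k → V) : Prop :=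
  (∀ i j : Fin k, i < j → (j : ℕ) - (i : ℕ) < G.dist (v i) (v j)) ∧
  (∀ u : V, ∃ i : Fin k, (i : ℕ) + 1 + G.dist (v i) u ≤ k + 1)

/-- The round in which the cooling process with sources `v` ends: the maximum over
vertices `u` of the first round in which `u` is cooled, `min_i (i + dist (v i) u)`
(1-based `i`). -/
noncomputable def coolTime {V : Type*} [Fintype V] (G : SimpleGraph V) {k : ℕ}
    (v : Fin k → V) : ℕ :=
  Finset.univ.sup fun u : V => sInf {m : ℕ | ∃ i : Fin k, m = (i : ℕ) + 1 + G.dist (v i) u}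

/-- The cooling number of `G`: the maximum, over all cooling sequences of `G`, of the
round in which the cooling process ends. -/
noncomputable def coolingNumber {V : Type*} [Fintype V] (G : SimpleGraph V) : ℕ :=
  sSup {T : ℕ | ∃ (k : ℕ) (v : Fin k → V), IsCoolingSeq G v ∧ T = coolTime G v}

/-- The spider with `l` legs each of length `r`: a head `Sum.inl ()` together with
`l` disjoint paths of `r` vertices; `Sum.inr (i, j)` is the `(j + 1)`-st vertex of
leg `i`, counting from the head, and the first vertex of each leg is joined to the
head. -/
def spider (l r : ℕ) : SimpleGraph (Unit ⊕ Fin l × Fin r) :=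
  SimpleGraph.fromRel fun a b =>
    match a, b with
    | Sum.inl _, Sum.inr p => (p.2 : ℕ) = 0
    | Sum.inr p, Sum.inr q => p.1 = q.1 ∧ (p.2 : ℕ) + 1 = (q.2 : ℕ)
    | _, _ => False


open SimpleGraph


def Ufun (r : ℕ) : ℕ → ℕ
  | 0 => 0
  | s+1 => Ufun r s + (r+1)/2^(s+1)

lemma Ufun_eq_sum (r m : ℕ) : Ufun r m = ∑ i ∈ Finset.Icc 1 m, (r+1)/2^i := by
  induction m with
  | zero => simp [Ufun]
  | succ n ih =>
    rw [Finset.sum_Icc_succ_top (by omega), ← ih, Ufun]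

lemma two_c_le (r s : ℕ) : 2 * ((r+1)/2^(s+1)) ≤ (r+1)/2^s := by
  have h : (r+1)/2^(s+1) = (r+1)/2^s/2 := by
    rw [pow_succ, Nat.div_div_eq_div_mul]
  rw [h, mul_comm]
  exact Nat.div_mul_le_self _ 2

lemma Ufun_c_le (r : ℕ) : ∀ s, Ufun r (s+1) + (r+1)/2^(s+1) ≤ r + 1 := by
  intro s
  induction s with
  | zero =>
    have := two_c_le r 0
    simp only [Ufun] at *
    omega
  | succ n ih =>
    have h2 : 2 * ((r+1)/2^(n+2)) ≤ (r+1)/2^(n+1) := two_c_le r (n+1)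
    have hU : Ufun r (n+2) = Ufun r (n+1) + (r+1)/2^(n+2) := rfl
    show Ufun r (n+2) + (r+1)/2^(n+2) ≤ r + 1
    omega

lemma c_anti (r : ℕ) {s t : ℕ} (h : s ≤ t) : (r+1)/2^t ≤ (r+1)/2^s :=
  Nat.div_le_div_left (Nat.pow_le_pow_right (by omega) h) (Nat.pow_pos (by omega) : 0 < 2^s)

lemma c_pos (m r : ℕ) (h2 : 2^m < r + 1) {s : ℕ} (hs : s ≤ m) : 1 ≤ (r+1)/2^s := by
  have h1 : 1 ≤ (r+1)/2^m := (Nat.one_le_div_iff (Nat.pow_pos (by omega) : 0 < 2^m)).2 (le_of_lt h2)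
  exact le_trans h1 (c_anti r hs)

lemma decode (r : ℕ) : ∀ m x, x < Ufun r m → ∃ s, s < m ∧ Ufun r s ≤ x ∧ x < Ufun r (s+1) := by
  intro m
  induction m with
  | zero => intro x hx; simp [Ufun] at hx
  | succ n ih =>
    intro x hx
    by_cases h : x < Ufun r n
    · obtain ⟨s, h1, h2, h3⟩ := ih x h
      exact ⟨s, by omega, h2, h3⟩
    · exact ⟨n, by omega, by omega, hx⟩

def xof (S q : ℕ) : ℕ := if q < S then S - 1 - q else q - S

def legN (m S : ℕ) (sf : ℕ → ℕ) (q : ℕ) : ℕ :=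
  if q < S then m - 1 - sf (xof S q) else m + sf (xof S q)

def depN (r S : ℕ) (sf : ℕ → ℕ) (q : ℕ) : ℕ :=
  r + 1 - 2*((r+1)/2^(sf (xof S q)+1)) + 2*(xof S q - Ufun r (sf (xof S q)))

lemma walk_pot {V : Type*} {G : SimpleGraph V} (φ : V → ℤ)
    (h : ∀ a b, G.Adj a b → |φ a - φ b| ≤ 1) {u v : V} (p : G.Walk u v) :
    |φ u - φ v| ≤ p.length := by
  induction p with
  | nil => simp
  | @cons a b c hab p ih =>
    calc |φ a - φ c| ≤ |φ a - φ b| + |φ b - φ c| := abs_sub_le _ _ _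
      _ ≤ 1 + p.length := add_le_add (h _ _ hab) ih
      _ = (p.length + 1 : ℕ) := by push_cast; ring

lemma dist_pot {V : Type*} {G : SimpleGraph V} (φ : V → ℤ)
    (h : ∀ a b, G.Adj a b → |φ a - φ b| ≤ 1) {u v : V} (hr : G.Reachable u v) :
    |φ u - φ v| ≤ G.dist u v := by
  obtain ⟨p, hp⟩ := hr.exists_walk_length_eq_dist
  simpa [hp] using walk_pot φ h p

-- adjacency helper
lemma spider_adj {l r : ℕ} {a b : Unit ⊕ Fin l × Fin r} (hab : (spider l r).Adj a b) :
    (∃ p : Fin l × Fin r, (p.2 : ℕ) = 0 ∧ ((a = Sum.inl () ∧ b = Sum.inr p) ∨ (b = Sum.inl () ∧ a = Sum.inr p))) ∨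
    (∃ p q : Fin l × Fin r, p.1 = q.1 ∧ (p.2 : ℕ) + 1 = (q.2 : ℕ) ∧
      ((a = Sum.inr p ∧ b = Sum.inr q) ∨ (b = Sum.inr p ∧ a = Sum.inr q))) := by
  rw [spider, SimpleGraph.fromRel_adj] at hab
  obtain ⟨hne, hrel | hrel⟩ := hab
  · match a, b with
    | Sum.inl u, Sum.inr p => exact Or.inl ⟨p, hrel, Or.inl ⟨by simp, rfl⟩⟩
    | Sum.inr p, Sum.inr q => exact Or.inr ⟨p, q, hrel.1, hrel.2, Or.inl ⟨rfl, rfl⟩⟩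
  · match a, b with
    | Sum.inr p, Sum.inl u => exact Or.inl ⟨p, hrel, Or.inr ⟨by simp, rfl⟩⟩
    | Sum.inr p, Sum.inr q => exact Or.inr ⟨q, p, hrel.1, hrel.2, Or.inr ⟨rfl, rfl⟩⟩

lemma spider_reach_head {l r : ℕ} (i : Fin l) (d : Fin r) :
    (spider l r).Reachable (Sum.inl ()) (Sum.inr (i, d)) := by
  obtain ⟨n, hn⟩ := d
  induction n with
  | zero =>
    exact SimpleGraph.Adj.reachable (by
      rw [spider, SimpleGraph.fromRel_adj]
      exact ⟨by simp, Or.inl rfl⟩)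
  | succ n ih =>
    refine ((ih (by omega)).trans (SimpleGraph.Adj.reachable ?_))
    rw [spider, SimpleGraph.fromRel_adj]
    refine ⟨by simp [Prod.ext_iff, Fin.ext_iff], Or.inl ⟨rfl, rfl⟩⟩

lemma spider_reach {l r : ℕ} (i j : Fin l) (a b : Fin r) :
    (spider l r).Reachable (Sum.inr (i, a)) (Sum.inr (j, b)) :=
  (spider_reach_head i a).symm.trans (spider_reach_head j b)

lemma spider_dist_same {l r : ℕ} (i : Fin l) (a b : Fin r) :
    |(a : ℤ) - b| ≤ (spider l r).dist (Sum.inr (i, a)) (Sum.inr (i, b)) := by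
  have hφ : ∀ x y, (spider l r).Adj x y →
      |(fun u => match u with | Sum.inl _ => (0:ℤ) | Sum.inr p => (p.2 : ℤ) + 1) x -
       (fun u => match u with | Sum.inl _ => (0:ℤ) | Sum.inr p => (p.2 : ℤ) + 1) y| ≤ 1 := by
    intro x y hxy
    rcases spider_adj hxy with ⟨p, hp0, (⟨rfl, rfl⟩ | ⟨rfl, rfl⟩)⟩ |
      ⟨p, q, hpq, hd, (⟨rfl, rfl⟩ | ⟨rfl, rfl⟩)⟩ <;> simp_all [abs_le] <;> omega
  simpa using dist_pot _ hφ (spider_reach i i a b)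

lemma spider_dist_cross {l r : ℕ} {i j : Fin l} (hij : i ≠ j) (a b : Fin r) :
    (a : ℤ) + b + 2 ≤ (spider l r).dist (Sum.inr (i, a)) (Sum.inr (j, b)) := by
  classical
  set φ : Unit ⊕ Fin l × Fin r → ℤ := fun u => match u with
    | Sum.inl _ => 0
    | Sum.inr p => if p.1 = i then (p.2 : ℤ) + 1 else -((p.2 : ℤ) + 1) with hφdef
  have hφ : ∀ x y, (spider l r).Adj x y → |φ x - φ y| ≤ 1 := by
    intro x y hxy
    rcases spider_adj hxy with ⟨p, hp0, (⟨rfl, rfl⟩ | ⟨rfl, rfl⟩)⟩ |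
      ⟨p, q, hpq, hd, (⟨rfl, rfl⟩ | ⟨rfl, rfl⟩)⟩ <;>
      simp only [hφdef] <;> split_ifs <;> simp_all [abs_le] <;> omega
  have := dist_pot φ hφ (spider_reach i j a b)
  have h2 : φ (Sum.inr (i,a)) = (a:ℤ)+1 := by simp [hφdef]
  have h3 : φ (Sum.inr (j,b)) = -((b:ℤ)+1) := by simp [hφdef, Ne.symm hij]
  rw [h2, h3] at this
  have habs : |((a:ℤ)+1) - (-((b:ℤ)+1))| = (a:ℤ) + b + 2 := by
    rw [abs_of_nonneg (by push_cast; omega)]; ring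
  rw [habs] at this
  omega

lemma spider_valid_seq (m r : ℕ) (hm : 1 ≤ m) (hr : 1 ≤ r) (h2 : 2^m < r+1) :
    ∃ v : Fin (2 * Ufun r m) → (Unit ⊕ Fin (2*m) × Fin r),
      ∀ i j : Fin (2 * Ufun r m), i < j →
        (j:ℕ) - (i:ℕ) < (spider (2*m) r).dist (v i) (v j) := by
  classical
  set S := Ufun r m with hS
  have hdec : ∀ x : ℕ, ∃ s, x < S → (s < m ∧ Ufun r s ≤ x ∧ x < Ufun r (s+1)) := by
    intro x
    by_cases hx : x < S
    · obtain ⟨s, h⟩ := decode r m x hx; exact ⟨s, fun _ => h⟩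
    · exact ⟨0, fun h => absurd h hx⟩
  choose sf hsf using hdec
  have key : ∀ q : ℕ, q < 2*S →
      xof S q < S ∧ legN m S sf q < 2*m ∧ depN r S sf q < r ∧ xof S q ≤ depN r S sf q := by
    intro q hq
    have hx : xof S q < S := by unfold xof; split <;> omega
    obtain ⟨h1, h2', h3⟩ := hsf (xof S q) hx
    have hUc : Ufun r (sf (xof S q) + 1) =
        Ufun r (sf (xof S q)) + (r+1)/2^(sf (xof S q)+1) := rfl
    have hF := Ufun_c_le r (sf (xof S q))
    have hleg : legN m S sf q < 2*m := by unfold legN; split <;> omega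
    refine ⟨hx, hleg, ?_, ?_⟩ <;> unfold depN <;> omega
  have hm2 : 0 < 2*m := by omega
  refine ⟨fun q => Sum.inr (⟨legN m S sf q % (2*m), Nat.mod_lt _ hm2⟩,
                            ⟨depN r S sf q % r, Nat.mod_lt _ (by omega)⟩), ?_⟩
  intro i j hij
  beta_reduce
  obtain ⟨hx1, hleg1, hdep1, hkey1⟩ := key i i.isLt
  obtain ⟨hx2, hleg2, hdep2, hkey2⟩ := key j j.isLt
  have hmod1 : legN m S sf ↑i % (2*m) = legN m S sf ↑i := Nat.mod_eq_of_lt hleg1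
  have hmod2 : legN m S sf ↑j % (2*m) = legN m S sf ↑j := Nat.mod_eq_of_lt hleg2
  have hdmod1 : depN r S sf ↑i % r = depN r S sf ↑i := Nat.mod_eq_of_lt hdep1
  have hdmod2 : depN r S sf ↑j % r = depN r S sf ↑j := Nat.mod_eq_of_lt hdep2
  have hij' : (i:ℕ) < (j:ℕ) := hij
  by_cases hll : legN m S sf ↑i = legN m S sf ↑j
  · -- same leg
    have hLfin : (⟨legN m S sf ↑i % (2*m), Nat.mod_lt _ hm2⟩ : Fin (2*m)) =
        ⟨legN m S sf ↑j % (2*m), Nat.mod_lt _ hm2⟩ := by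
      apply Fin.ext; simp only [hmod1, hmod2, hll]
    -- derive same phase and same s
    obtain ⟨h1a, h1b, h1c⟩ := hsf (xof S ↑i) hx1
    obtain ⟨h2a, h2b, h2c⟩ := hsf (xof S ↑j) hx2
    have hs12 : sf (xof S ↑i) = sf (xof S ↑j) ∧ ((i:ℕ) < S ↔ (j:ℕ) < S) := by
      unfold legN at hll
      by_cases p1 : (i:ℕ) < S <;> by_cases p2 : (j:ℕ) < S <;>
        simp only [p1, p2, if_true, if_false] at hll <;> constructor <;> first | omega | tauto
    obtain ⟨hseq, hphase⟩ := hs12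
    rw [hLfin]
    have hd := spider_dist_same (l := 2*m) (r := r)
      (⟨legN m S sf ↑j % (2*m), Nat.mod_lt _ hm2⟩)
      (⟨depN r S sf ↑i % r, Nat.mod_lt _ (by omega)⟩)
      (⟨depN r S sf ↑j % r, Nat.mod_lt _ (by omega)⟩)
    simp only [Fin.val_mk] at hd
    have hd1 := le_trans (le_abs_self _) hd
    have hd' := hd
    rw [abs_sub_comm] at hd'
    have hd2 := le_trans (le_abs_self _) hd'
    have e1 : depN r S sf ↑i = r + 1 - 2*((r+1)/2^(sf (xof S ↑i)+1))
        + 2*(xof S ↑i - Ufun r (sf (xof S ↑i))) := rfl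
    have e2 : depN r S sf ↑j = r + 1 - 2*((r+1)/2^(sf (xof S ↑i)+1))
        + 2*(xof S ↑j - Ufun r (sf (xof S ↑i))) := by
      unfold depN; rw [hseq]
    have h2b' : Ufun r (sf (xof S ↑i)) ≤ xof S ↑j := hseq ▸ h2b
    have h2c' : xof S ↑j < Ufun r (sf (xof S ↑i) + 1) := hseq ▸ h2c
    by_cases p1 : (i:ℕ) < S
    · have p2 : (j:ℕ) < S := hphase.mp p1
      have exi : xof S ↑i = S - 1 - ↑i := by unfold xof; rw [if_pos p1]
      have exj : xof S ↑j = S - 1 - ↑j := by unfold xof; rw [if_pos p2]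
      omega
    · have p2 : ¬ ((j:ℕ) < S) := fun hp => p1 (hphase.mpr hp)
      have exi : xof S ↑i = ↑i - S := by unfold xof; rw [if_neg p1]
      have exj : xof S ↑j = ↑j - S := by unfold xof; rw [if_neg p2]
      omega
  · -- different legs
    have hLne : (⟨legN m S sf ↑i % (2*m), Nat.mod_lt _ hm2⟩ : Fin (2*m)) ≠
        ⟨legN m S sf ↑j % (2*m), Nat.mod_lt _ hm2⟩ := by
      simp only [ne_eq, Fin.mk.injEq, hmod1, hmod2]; exact hll
    have hd := spider_dist_cross hLne
      (⟨depN r S sf ↑i % r, Nat.mod_lt _ (by omega)⟩)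
      (⟨depN r S sf ↑j % r, Nat.mod_lt _ (by omega)⟩)
    have hgap : (j:ℕ) - (i:ℕ) ≤ xof S ↑i + xof S ↑j + 1 := by
      unfold xof; split <;> split <;> omega
    simp only [Fin.val_mk] at hd
    omega

section generic
variable {V : Type*} [Fintype V] (G : SimpleGraph V)

/-- a valid sequence is injective -/
lemma valid_inj {k : ℕ} {v : Fin k → V}
    (hv : ∀ i j : Fin k, i < j → (j : ℕ) - (i : ℕ) < G.dist (v i) (v j)) :
    Function.Injective v := by
  intro i j hij
  by_contra hne
  rcases lt_trichotomy i j with h | h | h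
  · have := hv i j h
    rw [hij, SimpleGraph.dist_self] at this
    omega
  · exact hne h
  · have := hv j i h
    rw [hij, SimpleGraph.dist_self] at this
    omega

lemma valid_le_card {k : ℕ} {v : Fin k → V}
    (hv : ∀ i j : Fin k, i < j → (j : ℕ) - (i : ℕ) < G.dist (v i) (v j)) :
    k ≤ Fintype.card V := by
  have := Fintype.card_le_of_injective v (valid_inj G hv)
  simpa using this

/-- extension lemma -/
lemma exists_cooling_ext : ∀ (n k : ℕ) (v : Fin k → V),
    Fintype.card V + 1 - k ≤ n →
    (∀ i j : Fin k, i < j → (j : ℕ) - (i : ℕ) < G.dist (v i) (v j)) →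
    ∃ (k' : ℕ) (w : Fin k' → V), k ≤ k' ∧ IsCoolingSeq G w := by
  intro n
  induction n with
  | zero =>
    intro k v hn hv
    have := valid_le_card G hv
    omega
  | succ n ih =>
    intro k v hn hv
    by_cases hc : ∀ u : V, ∃ i : Fin k, (i : ℕ) + 1 + G.dist (v i) u ≤ k + 1
    · exact ⟨k, v, le_rfl, hv, hc⟩
    · push_neg at hc
      obtain ⟨u, hu⟩ := hc
      set w : Fin (k+1) → V := fun i => if h : (i : ℕ) < k then v ⟨i, h⟩ else u with hw
      have hwv : ∀ i j : Fin (k+1), i < j → (j : ℕ) - (i : ℕ) < G.dist (w i) (w j) := by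
        intro i j hij
        by_cases hj : (j : ℕ) < k
        · have hi : (i : ℕ) < k := lt_trans hij hj
          have := hv ⟨i, hi⟩ ⟨j, hj⟩ hij
          simpa [hw, dif_pos hi, dif_pos hj] using this
        · have hjk : (j : ℕ) = k := by omega
          have hi : (i : ℕ) < k := by omega
          have := hu ⟨i, hi⟩
          simp only [hw, dif_pos hi, dif_neg (by omega : ¬ (j:ℕ) < k)]
          simp only [Fin.val_mk] at this
          omega
      have hk1 : k + 1 ≤ Fintype.card V := valid_le_card G hwv
      obtain ⟨k', w', hk', hcool⟩ := ih (k+1) w (by omega) hwv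
      exact ⟨k', w', by omega, hcool⟩

lemma coolTime_ge {k : ℕ} (hk : 1 ≤ k) {w : Fin k → V}
    (hv : ∀ i j : Fin k, i < j → (j : ℕ) - (i : ℕ) < G.dist (w i) (w j)) :
    k ≤ coolTime G w := by
  have hlast : k - 1 < k := by omega
  set u := w ⟨k-1, hlast⟩ with hu
  have : k ≤ sInf {m : ℕ | ∃ i : Fin k, m = (i : ℕ) + 1 + G.dist (w i) u} := by
    refine le_csInf ⟨(k-1 : ℕ) + 1 + G.dist (w ⟨k-1, hlast⟩) u, ⟨⟨k-1, hlast⟩, by simp⟩⟩ ?_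
    rintro b ⟨i, rfl⟩
    by_cases hik : (i : ℕ) = k - 1
    · have : i = ⟨k-1, hlast⟩ := Fin.ext hik
      rw [this, ← hu, SimpleGraph.dist_self]
      omega
    · have hilt : i < (⟨k-1, hlast⟩ : Fin k) := by
        rw [Fin.lt_def]; simp; omega
      have := hv i ⟨k-1, hlast⟩ hilt
      simp only [← hu] at this ⊢
      omega
  unfold coolTime
  exact le_trans this (Finset.le_sup
    (f := fun u => sInf {m : ℕ | ∃ i : Fin k, m = (i : ℕ) + 1 + G.dist (w i) u})
    (Finset.mem_univ u))

lemma coolingNumber_bddAbove :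
    BddAbove {T : ℕ | ∃ (k : ℕ) (v : Fin k → V), IsCoolingSeq G v ∧ T = coolTime G v} := by
  refine ⟨Fintype.card V + 1, ?_⟩
  rintro T ⟨k, v, ⟨hval, hcool⟩, rfl⟩
  have hk := valid_le_card G hval
  have : coolTime G v ≤ k + 1 := by
    apply Finset.sup_le
    intro u _
    obtain ⟨i, hi⟩ := hcool u
    exact le_trans (Nat.sInf_le ⟨i, rfl⟩) hi
  omega

lemma le_coolingNumber {k : ℕ} (hk : 1 ≤ k) {w : Fin k → V} (hcool : IsCoolingSeq G w) :
    k ≤ coolingNumber G :=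
  le_trans (coolTime_ge G hk hcool.1)
    (le_csSup (coolingNumber_bddAbove G) ⟨k, w, hcool, rfl⟩)

end generic

/-- For a spider `T` with `2m` legs each of length `r`, if `m < ⌈log₂ (r + 1)⌉`, then
`CL(T) ≥ 2 * ∑_{i=1}^{m} ⌊(r + 1) / 2^i⌋`. -/
theorem coolingNumber_spider_lower (m r : ℕ) (hm : 1 ≤ m) (hr : 1 ≤ r)
    (h : m < Nat.clog 2 (r + 1)) :
    2 * ∑ i ∈ Finset.Icc 1 m, (r + 1) / 2 ^ i ≤ coolingNumber (spider (2 * m) r) := by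
  have h2 : 2 ^ m < r + 1 := (Nat.lt_clog_iff_pow_lt (by omega)).1 h
  obtain ⟨v, hv⟩ := spider_valid_seq m r hm hr h2
  obtain ⟨k', w, hk', hcool⟩ := exists_cooling_ext (spider (2*m) r)
    (Fintype.card (Unit ⊕ Fin (2*m) × Fin r) + 1) (2 * Ufun r m) v (by omega) hv
  have hS1 : 1 ≤ Ufun r m := by
    rcases m with _ | n
    · omega
    · have hc := c_pos (n+1) r h2 (le_refl (n+1))
      show 1 ≤ Ufun r n + (r+1)/2^(n+1)
      omega
  have hfin := le_coolingNumber (spider (2*m) r) (k := k') (by omega) hcool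
  rw [← Ufun_eq_sum]
  omega
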